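/- arXiv:2403.07618 — 2 statements merged into one kernel-verified Lean document; each statement's English description precedes it below -/
import Mathlib

section
/- Let P be stochastic, Π ∈ ℝ^{m×m} arbitrary with ‖Π‖_∞ ≠ 1, and A, π₀, p₀ arbitrary. Then ‖π₀ᵀΠ^k A − p₀ᵀP^k‖₁ ≤ ‖π₀ᵀA − p₀ᵀ‖₁ + ‖π₀‖₁·‖ΠA − AP‖_∞·(‖Π‖_∞^k − 1)/(‖Π‖_∞ − 1). -/
open Matrix BigOperators

noncomputable def l1 {n : ℕ} (v : Fin n → ℝ) : ℝ := ∑ i, |v i|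

noncomputable def ninf {m n : ℕ} (A : Matrix (Fin m) (Fin n) ℝ) : ℝ :=
  ⨆ i, ∑ j, |A i j|

def IsStochastic {m n : ℕ} (A : Matrix (Fin m) (Fin n) ℝ) : Prop :=
  (∀ i j, 0 ≤ A i j) ∧ ∀ i, ∑ j, A i j = 1

def IsGenerator {n : ℕ} (Q : Matrix (Fin n) (Fin n) ℝ) : Prop :=
  (∀ i j, i ≠ j → 0 ≤ Q i j) ∧ ∀ i, ∑ j, Q i j = 0

lemma l1_nonneg {n : ℕ} (v : Fin n → ℝ) : 0 ≤ l1 v :=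
  Finset.sum_nonneg fun _ _ => abs_nonneg _

lemma sum_abs_le_ninf {m n : ℕ} (A : Matrix (Fin m) (Fin n) ℝ) (i : Fin m) :
    ∑ j, |A i j| ≤ ninf A := by
  unfold ninf
  exact le_ciSup (f := fun i => ∑ j, |A i j|)
    (Set.Finite.bddAbove (Set.finite_range _)) i

lemma ninf_le {m n : ℕ} (A : Matrix (Fin m) (Fin n) ℝ) {c : ℝ}
    (h : ∀ i, ∑ j, |A i j| ≤ c) (hc : 0 ≤ c) : ninf A ≤ c :=
  Real.iSup_le h hc

lemma ninf_nonneg {m n : ℕ} (A : Matrix (Fin m) (Fin n) ℝ) : 0 ≤ ninf A := by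
  cases m with
  | zero => simp [ninf, Real.iSup_of_isEmpty]
  | succ m =>
    refine le_trans ?_ (sum_abs_le_ninf A 0)
    exact Finset.sum_nonneg fun _ _ => abs_nonneg _

lemma l1_vecMul_le {m n : ℕ} (v : Fin m → ℝ) (A : Matrix (Fin m) (Fin n) ℝ) :
    l1 (Matrix.vecMul v A) ≤ l1 v * ninf A := by
  unfold l1
  calc ∑ j, |Matrix.vecMul v A j| ≤ ∑ j, ∑ i, |v i| * |A i j| := by
        refine Finset.sum_le_sum fun j _ => ?_
        simp only [Matrix.vecMul, dotProduct]
        refine le_trans (Finset.abs_sum_le_sum_abs _ _) ?_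
        refine Finset.sum_le_sum fun i _ => ?_
        rw [abs_mul]
    _ = ∑ i, |v i| * ∑ j, |A i j| := by
        rw [Finset.sum_comm]; simp [Finset.mul_sum]
    _ ≤ ∑ i, |v i| * ninf A := by
        refine Finset.sum_le_sum fun i _ => ?_
        exact mul_le_mul_of_nonneg_left (sum_abs_le_ninf A i) (abs_nonneg _)
    _ = (∑ i, |v i|) * ninf A := by rw [Finset.sum_mul]

lemma ninf_mul_le {m n p : ℕ} (A : Matrix (Fin m) (Fin n) ℝ)
    (B : Matrix (Fin n) (Fin p) ℝ) : ninf (A * B) ≤ ninf A * ninf B := by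
  refine ninf_le _ (fun i => ?_) (mul_nonneg (ninf_nonneg A) (ninf_nonneg B))
  calc ∑ j, |(A * B) i j| ≤ ∑ j, ∑ l, |A i l| * |B l j| := by
        refine Finset.sum_le_sum fun j _ => ?_
        simp only [Matrix.mul_apply]
        refine le_trans (Finset.abs_sum_le_sum_abs _ _) ?_
        refine Finset.sum_le_sum fun l _ => ?_
        rw [abs_mul]
    _ = ∑ l, |A i l| * ∑ j, |B l j| := by
        rw [Finset.sum_comm]; simp [Finset.mul_sum]
    _ ≤ ∑ l, |A i l| * ninf B := by
        refine Finset.sum_le_sum fun l _ => ?_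
        exact mul_le_mul_of_nonneg_left (sum_abs_le_ninf B l) (abs_nonneg _)
    _ = (∑ l, |A i l|) * ninf B := by rw [Finset.sum_mul]
    _ ≤ ninf A * ninf B :=
        mul_le_mul_of_nonneg_right (sum_abs_le_ninf A i) (ninf_nonneg B)

lemma ninf_pow_le {m : ℕ} (A : Matrix (Fin m) (Fin m) ℝ) (k : ℕ) :
    ninf (A ^ k) ≤ ninf A ^ k := by
  induction k with
  | zero =>
    simp only [pow_zero]
    refine ninf_le _ (fun i => ?_) zero_le_one
    simp [Matrix.one_apply, apply_ite abs, Finset.sum_ite_eq]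
  | succ k ih =>
    rw [pow_succ, pow_succ]
    refine le_trans (ninf_mul_le _ _) ?_
    exact mul_le_mul_of_nonneg_right ih (ninf_nonneg A)

lemma ninf_stoch_le {n : ℕ} {P : Matrix (Fin n) (Fin n) ℝ} (hP : IsStochastic P) :
    ninf P ≤ 1 := by
  refine ninf_le _ (fun i => ?_) zero_le_one
  have : ∑ j, |P i j| = ∑ j, P i j :=
    Finset.sum_congr rfl fun j _ => abs_of_nonneg (hP.1 i j)
  rw [this, hP.2 i]

lemma l1_add_le {n : ℕ} (u v : Fin n → ℝ) : l1 (u + v) ≤ l1 u + l1 v := by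
  unfold l1
  rw [← Finset.sum_add_distrib]
  exact Finset.sum_le_sum fun i _ => abs_add_le _ _

theorem stmt_5 {m n : ℕ} (P : Matrix (Fin n) (Fin n) ℝ) (hP : IsStochastic P)
    (Pm : Matrix (Fin m) (Fin m) ℝ) (hPm : ninf Pm ≠ 1)
    (A : Matrix (Fin m) (Fin n) ℝ)
    (π₀ : Fin m → ℝ) (p₀ : Fin n → ℝ) (k : ℕ) :
    l1 (Matrix.vecMul π₀ (Pm ^ k * A) - Matrix.vecMul p₀ (P ^ k)) ≤
      l1 (Matrix.vecMul π₀ A - p₀) +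
        l1 π₀ * ninf (Pm * A - A * P) * ((ninf Pm ^ k - 1) / (ninf Pm - 1)) := by
  rw [← geom_sum_eq hPm k]
  set D := Pm * A - A * P with hD
  induction k with
  | zero => simp [Matrix.vecMul_one]
  | succ k ih =>
    have key : Pm ^ (k + 1) * A = Pm ^ k * D + (Pm ^ k * A) * P := by
      rw [hD, Matrix.mul_sub, ← Matrix.mul_assoc, ← Matrix.mul_assoc, ← pow_succ]
      abel
    have hvec : Matrix.vecMul π₀ (Pm ^ (k+1) * A) - Matrix.vecMul p₀ (P ^ (k+1))
        = Matrix.vecMul π₀ (Pm ^ k * D) +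
          Matrix.vecMul (Matrix.vecMul π₀ (Pm ^ k * A) - Matrix.vecMul p₀ (P ^ k)) P := by
      rw [key, Matrix.vecMul_add, Matrix.sub_vecMul, Matrix.vecMul_vecMul,
        Matrix.vecMul_vecMul, pow_succ]
      abel
    rw [hvec]
    refine le_trans (l1_add_le _ _) ?_
    have h1 : l1 (Matrix.vecMul π₀ (Pm ^ k * D)) ≤ l1 π₀ * (ninf Pm ^ k * ninf D) := by
      refine le_trans (l1_vecMul_le _ _) ?_
      refine mul_le_mul_of_nonneg_left ?_ (l1_nonneg _)
      refine le_trans (ninf_mul_le _ _) ?_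
      exact mul_le_mul_of_nonneg_right (ninf_pow_le _ _) (ninf_nonneg D)
    have h2 : l1 (Matrix.vecMul (Matrix.vecMul π₀ (Pm ^ k * A) - Matrix.vecMul p₀ (P ^ k)) P)
        ≤ l1 (Matrix.vecMul π₀ (Pm ^ k * A) - Matrix.vecMul p₀ (P ^ k)) := by
      refine le_trans (l1_vecMul_le _ _) ?_
      calc _ ≤ l1 _ * 1 := mul_le_mul_of_nonneg_left (ninf_stoch_le hP) (l1_nonneg _)
        _ = _ := mul_one _
    calc l1 (Matrix.vecMul π₀ (Pm ^ k * D)) +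
          l1 (Matrix.vecMul (Matrix.vecMul π₀ (Pm ^ k * A) - Matrix.vecMul p₀ (P ^ k)) P)
        ≤ l1 π₀ * (ninf Pm ^ k * ninf D) +
            (l1 (Matrix.vecMul π₀ A - p₀) + l1 π₀ * ninf D * ∑ i ∈ Finset.range k, ninf Pm ^ i) :=
          add_le_add h1 (le_trans h2 ih)
      _ = l1 (Matrix.vecMul π₀ A - p₀) +
            l1 π₀ * ninf D * ∑ i ∈ Finset.range (k+1), ninf Pm ^ i := by
          rw [Finset.sum_range_succ]; ring
end

section
/- Assume ΘA = AQ where Q is a CTMC generator matrix, and assume π₀ᵀA ≥ p₀ᵀ entrywise. Then for all t ≥ 0, ‖π₀ᵀe^{Θt}A − p₀ᵀe^{Qt}‖₁ = ‖π₀ᵀA − p₀ᵀ‖₁ and π₀ᵀe^{Θt}A ≥ p₀ᵀe^{Qt} entrywise. -/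
open Matrix BigOperators

open NormedSpace

lemma expSummable {a : ℕ} (M : Matrix (Fin a) (Fin a) ℝ) :
    Summable fun k : ℕ => ((k.factorial : ℝ))⁻¹ • M ^ k := by
  letI : SeminormedRing (Matrix (Fin a) (Fin a) ℝ) := Matrix.linftyOpSemiNormedRing
  letI : NormedRing (Matrix (Fin a) (Fin a) ℝ) := Matrix.linftyOpNormedRing
  letI : NormedAlgebra ℝ (Matrix (Fin a) (Fin a) ℝ) := Matrix.linftyOpNormedAlgebra
  exact expSeries_summable' (𝕂 := ℝ) M

lemma entrySummable {a : ℕ} (M : Matrix (Fin a) (Fin a) ℝ) (i j : Fin a) :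
    Summable fun k : ℕ => ((k.factorial : ℝ))⁻¹ * (M ^ k) i j := by
  have h1 := Pi.summable.mp (expSummable M) i
  have h2 := Pi.summable.mp h1 j
  simpa [Matrix.smul_apply, smul_eq_mul] using h2

lemma exp_entry {a : ℕ} (M : Matrix (Fin a) (Fin a) ℝ) (i j : Fin a) :
    NormedSpace.exp M i j = ∑' k : ℕ, ((k.factorial : ℝ))⁻¹ * (M ^ k) i j := by
  have h0 : NormedSpace.exp M = ∑' k : ℕ, (k.factorial : ℝ)⁻¹ • M ^ k := by
    rw [NormedSpace.exp_eq_tsum (𝕂 := ℝ)]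
  rw [h0]
  erw [tsum_apply (expSummable M), tsum_apply (Pi.summable.mp (expSummable M) i)]
  simp [Matrix.smul_apply, smul_eq_mul]

lemma pow_entry_nonneg {a : ℕ} {M : Matrix (Fin a) (Fin a) ℝ}
    (h : ∀ i j, 0 ≤ M i j) : ∀ (k : ℕ) (i j), 0 ≤ (M ^ k) i j := by
  intro k
  induction k with
  | zero => intro i j; rw [pow_zero, Matrix.one_apply]; split <;> norm_num
  | succ k ih =>
      intro i j
      rw [pow_succ, Matrix.mul_apply]
      exact Finset.sum_nonneg fun l _ => mul_nonneg (ih i l) (h l j)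

lemma exp_entry_nonneg {a : ℕ} {M : Matrix (Fin a) (Fin a) ℝ}
    (h : ∀ i j, 0 ≤ M i j) (i j : Fin a) : 0 ≤ NormedSpace.exp M i j := by
  rw [exp_entry]
  exact tsum_nonneg fun k => mul_nonneg (by positivity) (pow_entry_nonneg h k i j)

theorem stmt_11 {m n : ℕ} (Q : Matrix (Fin n) (Fin n) ℝ) (hQ : IsGenerator Q)
    (Θ : Matrix (Fin m) (Fin m) ℝ) (A : Matrix (Fin m) (Fin n) ℝ)
    (hdyn : Θ * A = A * Q) (π₀ : Fin m → ℝ) (p₀ : Fin n → ℝ)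
    (hord : ∀ i, p₀ i ≤ Matrix.vecMul π₀ A i) (t : ℝ) (ht : 0 ≤ t) :
    l1 (Matrix.vecMul π₀ (NormedSpace.exp (t • Θ) * A) -
          Matrix.vecMul p₀ (NormedSpace.exp (t • Q))) =
        l1 (Matrix.vecMul π₀ A - p₀) ∧
    ∀ i, Matrix.vecMul p₀ (NormedSpace.exp (t • Q)) i ≤
        Matrix.vecMul π₀ (NormedSpace.exp (t • Θ) * A) i := by
  set P := NormedSpace.exp (t • Q) with hPdef
  -- commutation of powers
  have hstep : (t • Θ) * A = A * (t • Q) := by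
    rw [Matrix.smul_mul, hdyn, Matrix.mul_smul]
  have hcomm : ∀ k : ℕ, (t • Θ) ^ k * A = A * (t • Q) ^ k := by
    intro k
    induction k with
    | zero => simp
    | succ k ih =>
        calc (t • Θ) ^ (k + 1) * A = (t • Θ) ^ k * ((t • Θ) * A) := by
              rw [pow_succ, Matrix.mul_assoc]
          _ = ((t • Θ) ^ k * A) * (t • Q) := by rw [hstep, Matrix.mul_assoc]
          _ = A * ((t • Q) ^ k * (t • Q)) := by rw [ih, Matrix.mul_assoc]
          _ = A * (t • Q) ^ (k + 1) := by rw [← pow_succ]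
  -- exp(tΘ) * A = A * P
  have hAP : NormedSpace.exp (t • Θ) * A = A * P := by
    ext i j
    rw [Matrix.mul_apply, Matrix.mul_apply]
    calc ∑ l, NormedSpace.exp (t • Θ) i l * A l j
        = ∑ l, ∑' k : ℕ, (((k.factorial : ℝ))⁻¹ * ((t • Θ) ^ k) i l) * A l j := by
          refine Finset.sum_congr rfl fun l _ => ?_
          rw [exp_entry, ← tsum_mul_right]
      _ = ∑' k : ℕ, ∑ l, (((k.factorial : ℝ))⁻¹ * ((t • Θ) ^ k) i l) * A l j :=
          (Summable.tsum_finsetSum fun l _ => ((entrySummable _ i l).mul_right _)).symm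
      _ = ∑' k : ℕ, ((k.factorial : ℝ))⁻¹ * ((t • Θ) ^ k * A) i j := by
          refine tsum_congr fun k => ?_
          rw [Matrix.mul_apply, Finset.mul_sum]
          exact Finset.sum_congr rfl fun l _ => (mul_assoc _ _ _)
      _ = ∑' k : ℕ, ((k.factorial : ℝ))⁻¹ * (A * (t • Q) ^ k) i j := by
          simp_rw [hcomm]
      _ = ∑' k : ℕ, ∑ l, A i l * (((k.factorial : ℝ))⁻¹ * ((t • Q) ^ k) l j) := by
          refine tsum_congr fun k => ?_
          rw [Matrix.mul_apply, Finset.mul_sum]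
          exact Finset.sum_congr rfl fun l _ => by ring
      _ = ∑ l, ∑' k : ℕ, A i l * (((k.factorial : ℝ))⁻¹ * ((t • Q) ^ k) l j) :=
          Summable.tsum_finsetSum fun l _ => ((entrySummable _ l j).mul_left _)
      _ = ∑ l, A i l * P l j := by
          refine Finset.sum_congr rfl fun l _ => ?_
          rw [tsum_mul_left, ← exp_entry]
  -- row sums of P are 1
  have hQrow : ∀ i, ∑ j, (t • Q) i j = 0 := by
    intro i
    simp only [Matrix.smul_apply, smul_eq_mul, ← Finset.mul_sum, hQ.2 i, mul_zero]
  have hrowpow : ∀ (k : ℕ) i, ∑ j, ((t • Q) ^ (k + 1)) i j = 0 := by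
    intro k i
    simp_rw [pow_succ, Matrix.mul_apply]
    rw [Finset.sum_comm]
    simp_rw [← Finset.mul_sum]
    have h0 : ∀ x : Fin n, ∑ y : Fin n, t * Q x y = 0 := by
      intro x; rw [← Finset.mul_sum, hQ.2 x, mul_zero]
    simp [h0]
  have hP1 : ∀ i, ∑ j, P i j = 1 := by
    intro i
    have h : ∑ j, P i j = ∑' k : ℕ, ∑ j, ((k.factorial : ℝ))⁻¹ * ((t • Q) ^ k) i j := by
      simp_rw [hPdef, exp_entry]
      exact (Summable.tsum_finsetSum fun j _ => entrySummable _ i j).symm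
    rw [h, tsum_eq_single 0]
    · simp [Matrix.one_apply]
    · intro k hk
      obtain ⟨k, rfl⟩ := Nat.exists_eq_succ_of_ne_zero hk
      simp [← Finset.mul_sum, hrowpow k i]
  -- nonnegativity of P
  set C : ℝ := ∑ i, ∑ j, |(t • Q) i j| with hCdef
  have hNC : ∀ i j, 0 ≤ (t • Q + C • (1 : Matrix (Fin n) (Fin n) ℝ)) i j := by
    intro i j
    by_cases hij : i = j
    · subst hij
      have h1 : |(t • Q) i i| ≤ ∑ j, |(t • Q) i j| :=
        Finset.single_le_sum (f := fun j => |(t • Q) i j|)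
          (fun j _ => abs_nonneg _) (Finset.mem_univ i)
      have h2 : ∑ j, |(t • Q) i j| ≤ C :=
        Finset.single_le_sum (f := fun i => ∑ j, |(t • Q) i j|)
          (fun i _ => Finset.sum_nonneg fun j _ => abs_nonneg _) (Finset.mem_univ i)
      have h3 := neg_abs_le ((t • Q) i i)
      simp only [Matrix.smul_apply, smul_eq_mul] at h1 h2 h3
      simp only [Matrix.add_apply, Matrix.smul_apply, Matrix.one_apply_eq, smul_eq_mul, mul_one]
      linarith
    · have : 0 ≤ (t • Q) i j := by
        simp only [Matrix.smul_apply, smul_eq_mul]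
        exact mul_nonneg ht (hQ.1 i j hij)
      simp only [Matrix.add_apply, Matrix.smul_apply, Matrix.one_apply_ne hij, smul_eq_mul,
        mul_zero, add_zero]
      simpa using this
  have hcommN : Commute (t • Q) (C • (1 : Matrix (Fin n) (Fin n) ℝ)) :=
    (Commute.one_right (t • Q)).smul_right C
  have hexpscalar : NormedSpace.exp (C • (1 : Matrix (Fin n) (Fin n) ℝ)) =
      Real.exp C • (1 : Matrix (Fin n) (Fin n) ℝ) := by
    ext i j
    rw [exp_entry]
    have h : ∀ k : ℕ, ((k.factorial : ℝ))⁻¹ * ((C • (1 : Matrix (Fin n) (Fin n) ℝ)) ^ k) i j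
        = (((k.factorial : ℝ))⁻¹ * C ^ k) * (1 : Matrix (Fin n) (Fin n) ℝ) i j := by
      intro k
      rw [smul_pow, one_pow]
      simp only [Matrix.smul_apply, smul_eq_mul]
      ring
    rw [tsum_congr h, tsum_mul_right]
    have hE : (∑' k : ℕ, ((k.factorial : ℝ))⁻¹ * C ^ k) = Real.exp C := by
      rw [Real.exp_eq_exp_ℝ, NormedSpace.exp_eq_tsum (𝕂 := ℝ)]
      simp [smul_eq_mul]
    rw [hE]
    simp [Matrix.smul_apply]
  have hPnn : ∀ i j, 0 ≤ P i j := by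
    intro i j
    have h1 : NormedSpace.exp (t • Q + C • (1 : Matrix (Fin n) (Fin n) ℝ))
        = Real.exp C • P := by
      rw [Matrix.exp_add_of_commute _ _ hcommN, hexpscalar, Matrix.mul_smul, mul_one]
    have h3 : 0 ≤ (Real.exp C • P) i j := h1 ▸ exp_entry_nonneg hNC i j
    have h4 : 0 ≤ Real.exp C * P i j := by simpa [Matrix.smul_apply, smul_eq_mul] using h3
    nlinarith [Real.exp_pos C]
  -- final computation
  set v : Fin n → ℝ := Matrix.vecMul π₀ A - p₀ with hvdef
  have hv : ∀ i, 0 ≤ v i := fun i => by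
    simp only [hvdef, Pi.sub_apply, sub_nonneg]; exact hord i
  have h5 : Matrix.vecMul π₀ (NormedSpace.exp (t • Θ) * A) - Matrix.vecMul p₀ P
      = Matrix.vecMul v P := by
    rw [hAP, ← Matrix.vecMul_vecMul, hvdef, Matrix.sub_vecMul]
  have hvP : ∀ j, Matrix.vecMul v P j = ∑ i, v i * P i j := fun j => by
    simp [Matrix.vecMul, dotProduct]
  have hvPnn : ∀ j, 0 ≤ Matrix.vecMul v P j := fun j => by
    rw [hvP]
    exact Finset.sum_nonneg fun i _ => mul_nonneg (hv i) (hPnn i j)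
  constructor
  · rw [h5]
    unfold l1
    calc ∑ j, |Matrix.vecMul v P j| = ∑ j, ∑ i, v i * P i j := by
          refine Finset.sum_congr rfl fun j _ => ?_
          rw [abs_of_nonneg (hvPnn j), hvP]
      _ = ∑ i, v i * ∑ j, P i j := by
          rw [Finset.sum_comm]
          simp [Finset.mul_sum]
      _ = ∑ i, v i := by simp [hP1]
      _ = ∑ i, |v i| := Finset.sum_congr rfl fun i _ => (abs_of_nonneg (hv i)).symm
  · intro i
    have := hvPnn i
    have h6 := congrFun h5 i
    simp only [Pi.sub_apply] at h6
    linarith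
end
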